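/- Let $A, B$ be positive semidefinite operators on a finite-dimensional Hilbert space with $A$ of rank one. Then $\frac{1}{2}\operatorname{Tr}(A+B) - \frac{1}{2}\|A-B\|_1 \le \frac{1}{\operatorname{Tr} A} F(A,B)^2$, where $F(A,B) = \|A^{1/2}B^{1/2}\|_1$ and $A$ is assumed nonzero. -/

import Mathlib

open Matrix
open scoped ComplexOrder

/-- The square root of a positive semidefinite matrix, as `Matrix.PosSemidef.sqrt` was defined
in Mathlib of December 2024 (that declaration has since been removed). -/
noncomputable def posSemidefSqrtOld {m : ℕ} {A : Matrix (Fin m) (Fin m) ℂ} (hA : A.PosSemidef) :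
    Matrix (Fin m) (Fin m) ℂ :=
  hA.1.eigenvectorUnitary.1 * diagonal ((↑) ∘ (√·) ∘ hA.1.eigenvalues) *
    (star hA.1.eigenvectorUnitary : Matrix (Fin m) (Fin m) ℂ)

noncomputable def matAbs {m : ℕ} (A : Matrix (Fin m) (Fin m) ℂ) : Matrix (Fin m) (Fin m) ℂ :=
  posSemidefSqrtOld (Matrix.posSemidef_conjTranspose_mul_self A)

noncomputable def traceNorm {m : ℕ} (A : Matrix (Fin m) (Fin m) ℂ) : ℝ :=
  ((matAbs A).trace).re

open Classical in
noncomputable def psdSqrt {m : ℕ} (A : Matrix (Fin m) (Fin m) ℂ) : Matrix (Fin m) (Fin m) ℂ :=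
  if h : A.PosSemidef then posSemidefSqrtOld h else 0

noncomputable def fid {m : ℕ} (A B : Matrix (Fin m) (Fin m) ℂ) : ℝ :=
  traceNorm (psdSqrt A * psdSqrt B)

noncomputable def matPosPart {m : ℕ} (A : Matrix (Fin m) (Fin m) ℂ) : Matrix (Fin m) (Fin m) ℂ :=
  (2⁻¹ : ℂ) • (matAbs A + A)

noncomputable def matNegPart {m : ℕ} (A : Matrix (Fin m) (Fin m) ℂ) : Matrix (Fin m) (Fin m) ℂ :=
  (2⁻¹ : ℂ) • (matAbs A - A)

section helpers
variable {d : ℕ} {M : Matrix (Fin d) (Fin d) ℂ}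


noncomputable def udu (hH : M.IsHermitian) (f : Fin d → ℝ) : Matrix (Fin d) (Fin d) ℂ :=
  (IsHermitian.eigenvectorUnitary hH : Matrix (Fin d) (Fin d) ℂ) * diagonal (RCLike.ofReal ∘ f)
    * (star (IsHermitian.eigenvectorUnitary hH : Matrix (Fin d) (Fin d) ℂ))

lemma udu_spectral (hH : M.IsHermitian) : M = udu hH hH.eigenvalues := hH.spectral_theorem

lemma star_mul_self_eigen (hH : M.IsHermitian) :
    star (IsHermitian.eigenvectorUnitary hH : Matrix (Fin d) (Fin d) ℂ) *
      (IsHermitian.eigenvectorUnitary hH : Matrix (Fin d) (Fin d) ℂ) = 1 :=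
  Matrix.mem_unitaryGroup_iff'.mp (IsHermitian.eigenvectorUnitary hH).2

lemma udu_mul (hH : M.IsHermitian) (f g : Fin d → ℝ) :
    udu hH f * udu hH g = udu hH (f * g) := by
  unfold udu
  have hdiag : diagonal (RCLike.ofReal ∘ f) * diagonal (RCLike.ofReal ∘ g)
      = (diagonal (RCLike.ofReal ∘ (f * g)) : Matrix (Fin d) (Fin d) ℂ) := by
    rw [diagonal_mul_diagonal]
    ext i j
    by_cases h : i = j <;> simp [Matrix.diagonal_apply, h]
  simp only [mul_assoc]
  rw [← mul_assoc (star _) _ _, star_mul_self_eigen hH, one_mul,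
    ← mul_assoc (diagonal _) (diagonal _) _, hdiag]

lemma udu_trace (hH : M.IsHermitian) (f : Fin d → ℝ) :
    (udu hH f).trace = ((∑ i, f i : ℝ) : ℂ) := by
  unfold udu
  rw [Matrix.trace_mul_cycle, star_mul_self_eigen hH, one_mul, trace_diagonal]
  push_cast
  rfl

lemma udu_posSemidef (hH : M.IsHermitian) {f : Fin d → ℝ} (hf : ∀ i, 0 ≤ f i) :
    (udu hH f).PosSemidef := by
  have h1 : (diagonal (RCLike.ofReal ∘ f) : Matrix (Fin d) (Fin d) ℂ).PosSemidef :=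
    posSemidef_diagonal_iff.mpr fun i => by
      simpa using Complex.zero_le_real.mpr (hf i)
  simpa [udu, Matrix.star_eq_conjTranspose] using
    h1.mul_mul_conjTranspose_same (IsHermitian.eigenvectorUnitary hH : Matrix (Fin d) (Fin d) ℂ)

namespace Matrix.PosSemidef

noncomputable abbrev sqrt {A : Matrix (Fin d) (Fin d) ℂ} (hA : A.PosSemidef) :
    Matrix (Fin d) (Fin d) ℂ :=
  posSemidefSqrtOld hA

lemma sqrt_eq_udu {A : Matrix (Fin d) (Fin d) ℂ} (hA : A.PosSemidef) :
    hA.sqrt = udu hA.1 (fun i => √(hA.1.eigenvalues i)) := rfl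

lemma sqrt_mul_self {A : Matrix (Fin d) (Fin d) ℂ} (hA : A.PosSemidef) :
    hA.sqrt * hA.sqrt = A := by
  rw [sqrt_eq_udu, udu_mul]
  conv_rhs => rw [udu_spectral hA.1]
  congr 1
  funext i
  simp only [Pi.mul_apply]
  exact Real.mul_self_sqrt (hA.eigenvalues_nonneg i)

lemma posSemidef_sqrt {A : Matrix (Fin d) (Fin d) ℂ} (hA : A.PosSemidef) :
    hA.sqrt.PosSemidef := by
  rw [sqrt_eq_udu]
  exact udu_posSemidef _ fun i => Real.sqrt_nonneg _

lemma eq_sqrt_of_sq_eq {A B : Matrix (Fin d) (Fin d) ℂ} (hA : A.PosSemidef)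
    (hB : B.PosSemidef) (hAB : A ^ 2 = B) : A = hB.sqrt := by
  subst hAB
  have h1 : hB.sqrt = cfc Real.sqrt (A ^ 2) := by
    rw [IsHermitian.cfc_eq hB.1, IsHermitian.cfc, Unitary.conjStarAlgAut_apply]
    rfl
  have hsa : IsSelfAdjoint A := hA.1
  have hf : (fun x : ℝ => √(x ^ 2)) ∘ hA.1.eigenvalues = hA.1.eigenvalues :=
    funext fun i => Real.sqrt_sq (hA.eigenvalues_nonneg i)
  rw [h1, ← cfc_comp_pow Real.sqrt 2 A (ha := hsa), IsHermitian.cfc_eq hA.1, IsHermitian.cfc,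
    Unitary.conjStarAlgAut_apply, hf]
  exact hA.1.spectral_theorem

end Matrix.PosSemidef

lemma udu_smul (hH : M.IsHermitian) (c : ℝ) (f : Fin d → ℝ) :
    (c : ℂ) • udu hH f = udu hH (c • f) := by
  unfold udu
  rw [← Matrix.smul_mul, ← Matrix.mul_smul]
  congr 2
  ext i j
  rw [Matrix.smul_apply]
  by_cases h : i = j <;> simp [Matrix.diagonal_apply, h]

lemma udu_add (hH : M.IsHermitian) (f g : Fin d → ℝ) :
    udu hH f + udu hH g = udu hH (f + g) := by
  unfold udu
  have hdiag : diagonal (RCLike.ofReal ∘ f) + diagonal (RCLike.ofReal ∘ g)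
      = (diagonal (RCLike.ofReal ∘ (f + g)) : Matrix (Fin d) (Fin d) ℂ) := by
    rw [diagonal_add]
    ext i j
    by_cases h : i = j <;> simp [Matrix.diagonal_apply, h]
  rw [← Matrix.add_mul, ← Matrix.mul_add, hdiag]

lemma udu_sub (hH : M.IsHermitian) (f g : Fin d → ℝ) :
    udu hH f - udu hH g = udu hH (f - g) := by
  have h1 : ((-1:ℝ):ℂ) • udu hH g = udu hH (-g) := by
    rw [udu_smul hH (-1) g, neg_one_smul]
  rw [sub_eq_add_neg, show -udu hH g = ((-1:ℝ):ℂ) • udu hH g by push_cast; simp, h1,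
    udu_add hH f (-g), sub_eq_add_neg]

/-- trace of a PSD matrix is a nonneg real -/
lemma psdTrace_re_nonneg (hM : M.PosSemidef) : 0 ≤ M.trace.re := by
  rw [udu_spectral hM.1, udu_trace]
  simp only [Complex.ofReal_re]
  exact Finset.sum_nonneg fun i _ => hM.eigenvalues_nonneg i

lemma psdTrace_eq_re (hM : M.PosSemidef) : M.trace = (M.trace.re : ℂ) := by
  rw [udu_spectral hM.1, udu_trace]
  simp

/-- trace of product of two PSD matrices is nonneg -/
lemma trace_mul_psd_nonneg {A B : Matrix (Fin d) (Fin d) ℂ} (hA : A.PosSemidef)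
    (hB : B.PosSemidef) : 0 ≤ ((A * B).trace).re := by
  have h1 : A * B = hA.sqrt * (hA.sqrt * B) := by
    rw [← mul_assoc, hA.sqrt_mul_self]
  have h2 : (A * B).trace = (hA.sqrt * B * hA.sqrt).trace := by
    rw [h1, Matrix.trace_mul_comm, mul_assoc]
  have h3 : (hA.sqrt * B * hA.sqrt).PosSemidef := by
    have := hB.conjTranspose_mul_mul_same hA.sqrt
    rwa [hA.posSemidef_sqrt.1] at this
  rw [h2]
  exact psdTrace_re_nonneg h3

lemma matAbs_eq (hH : M.IsHermitian) : matAbs M = udu hH (fun i => |hH.eigenvalues i|) := by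
  have hps : (udu hH fun i => |hH.eigenvalues i|).PosSemidef :=
    udu_posSemidef hH fun i => abs_nonneg _
  have hsq : (udu hH fun i => |hH.eigenvalues i|) ^ 2 = Mᴴ * M := by
    rw [pow_two, udu_mul, hH.eq]
    conv_rhs => rw [udu_spectral hH, udu_mul]
    have hfg : (fun i => |hH.eigenvalues i|) * (fun i => |hH.eigenvalues i|)
        = hH.eigenvalues * hH.eigenvalues := funext fun i => abs_mul_abs_self _
    rw [hfg]
  exact (hps.eq_sqrt_of_sq_eq _ hsq).symm

lemma matPosPart_posSemidef (hH : M.IsHermitian) : (matPosPart M).PosSemidef := by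
  have hsum : matAbs M + M
      = udu hH (fun i => |hH.eigenvalues i|) + udu hH hH.eigenvalues := by
    rw [← matAbs_eq hH, ← udu_spectral hH]
  rw [matPosPart, hsum, udu_add, show ((2:ℂ)⁻¹ = ((2⁻¹:ℝ) : ℂ)) by norm_num, udu_smul]
  exact udu_posSemidef hH fun i => by
    simp only [Pi.smul_apply, Pi.add_apply, smul_eq_mul]
    linarith [neg_abs_le (hH.eigenvalues i)]

lemma matNegPart_posSemidef (hH : M.IsHermitian) : (matNegPart M).PosSemidef := by
  have hsum : matAbs M - M
      = udu hH (fun i => |hH.eigenvalues i|) - udu hH hH.eigenvalues := by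
    rw [← matAbs_eq hH, ← udu_spectral hH]
  rw [matNegPart, hsum, udu_sub, show ((2:ℂ)⁻¹ = ((2⁻¹:ℝ) : ℂ)) by norm_num, udu_smul]
  exact udu_posSemidef hH fun i => by
    simp only [Pi.smul_apply, Pi.sub_apply, smul_eq_mul]
    linarith [le_abs_self (hH.eigenvalues i)]

lemma matPosPart_sub_matNegPart : matPosPart M - matNegPart M = M := by
  unfold matPosPart matNegPart
  ext i j
  simp only [Matrix.sub_apply, Matrix.add_apply, Matrix.smul_apply, smul_eq_mul]
  ring

lemma matPosPart_add_matNegPart : matPosPart M + matNegPart M = matAbs M := by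
  unfold matPosPart matNegPart
  ext i j
  simp only [Matrix.sub_apply, Matrix.add_apply, Matrix.smul_apply, smul_eq_mul]
  ring

/-- For PSD X, tr(X*X).re ≤ (tr X).re ^ 2 -/
lemma trace_sq_le (hX : M.PosSemidef) : ((M * M).trace).re ≤ (M.trace.re) ^ 2 := by
  have h1 : M * M = udu hX.1 (hX.1.eigenvalues * hX.1.eigenvalues) := by
    conv_lhs => rw [udu_spectral hX.1]
    rw [udu_mul]
  have ht : M.trace = ((∑ i, hX.1.eigenvalues i : ℝ) : ℂ) := by
    conv_lhs => rw [udu_spectral hX.1]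
    exact udu_trace _ _
  rw [h1, udu_trace, ht]
  simp only [Complex.ofReal_re, Pi.mul_apply]
  rw [sq]
  calc ∑ i, hX.1.eigenvalues i * hX.1.eigenvalues i
      ≤ ∑ i, hX.1.eigenvalues i * (∑ j, hX.1.eigenvalues j) := by
        refine Finset.sum_le_sum fun i _ => ?_
        exact mul_le_mul_of_nonneg_left
          (Finset.single_le_sum (fun j _ => hX.eigenvalues_nonneg j) (Finset.mem_univ i))
          (hX.eigenvalues_nonneg i)
    _ = (∑ i, hX.1.eigenvalues i) * (∑ j, hX.1.eigenvalues j) := by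
        rw [← Finset.sum_mul]


lemma udu_one (hH : M.IsHermitian) : udu hH (1 : Fin d → ℝ) = 1 := by
  unfold udu
  have : diagonal (RCLike.ofReal ∘ (1 : Fin d → ℝ)) = (1 : Matrix (Fin d) (Fin d) ℂ) := by
    ext i j
    by_cases h : i = j <;> simp [Matrix.diagonal_apply, Matrix.one_apply, h]
  rw [this, mul_one, Matrix.mem_unitaryGroup_iff.mp (IsHermitian.eigenvectorUnitary hH).2]

/-- Frobenius-norm lower bound on the trace norm, squared:
`tr(AB).re ≤ fid A B ^ 2` for PSD `A`, `B`. -/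
lemma trace_mul_le_fid_sq {A B : Matrix (Fin d) (Fin d) ℂ} (hA : A.PosSemidef)
    (hB : B.PosSemidef) : ((A * B).trace).re ≤ fid A B ^ 2 := by
  classical
  set M0 := psdSqrt A * psdSqrt B with hM0
  have hM0' : M0 = hA.sqrt * hB.sqrt := by
    rw [hM0, psdSqrt, psdSqrt, dif_pos hA, dif_pos hB]
  have habs : matAbs M0 * matAbs M0 = M0ᴴ * M0 :=
    (Matrix.posSemidef_conjTranspose_mul_self M0).sqrt_mul_self
  have hX : (matAbs M0).PosSemidef :=
    (Matrix.posSemidef_conjTranspose_mul_self M0).posSemidef_sqrt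
  have h1 : M0ᴴ * M0 = hB.sqrt * A * hB.sqrt := by
    rw [hM0', conjTranspose_mul, hA.posSemidef_sqrt.1, hB.posSemidef_sqrt.1]
    rw [mul_assoc, ← mul_assoc hA.sqrt hA.sqrt hB.sqrt, hA.sqrt_mul_self, ← mul_assoc]
  have h2 : (M0ᴴ * M0).trace = (A * B).trace := by
    rw [h1, Matrix.trace_mul_cycle, hB.sqrt_mul_self, Matrix.trace_mul_comm]
  have h3 := trace_sq_le hX
  rw [habs, h2] at h3
  calc ((A * B).trace).re ≤ ((matAbs M0).trace.re) ^ 2 := h3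
    _ = fid A B ^ 2 := rfl

/-- rank-one PSD matrix facts -/
lemma rank_one_facts {A : Matrix (Fin d) (Fin d) ℂ} (hA : A.PosSemidef) (hrank : A.rank = 1) :
    0 < A.trace.re ∧ A * A = ((A.trace.re : ℝ) : ℂ) • A := by
  classical
  set lam := hA.1.eigenvalues with hlam
  have hcard : Fintype.card {i // lam i ≠ 0} = 1 := by
    rw [hlam, ← hA.1.rank_eq_card_non_zero_eigs, hrank]
  obtain ⟨x, hx⟩ := Fintype.card_eq_one_iff.mp hcard
  have hzero : ∀ j, j ≠ x.1 → lam j = 0 := by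
    intro j hj
    by_contra h
    exact hj (congrArg Subtype.val (hx ⟨j, h⟩))
  have hsum : ∑ i, lam i = lam x.1 :=
    Finset.sum_eq_single x.1 (fun j _ hj => hzero j hj) (fun h => absurd (Finset.mem_univ _) h)
  have ht : A.trace = ((∑ i, lam i : ℝ) : ℂ) := by
    conv_lhs => rw [udu_spectral hA.1]
    exact udu_trace _ _
  have ha : A.trace.re = lam x.1 := by rw [ht, hsum]; simp
  have hpos : 0 < lam x.1 := lt_of_le_of_ne (hA.eigenvalues_nonneg x.1) (Ne.symm x.2)
  refine ⟨ha ▸ hpos, ?_⟩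
  have hmul : A * A = udu hA.1 (lam * lam) := by
    conv_lhs => rw [udu_spectral hA.1]
    rw [udu_mul]
  have hfun : lam * lam = lam x.1 • lam := by
    funext i
    by_cases h : i = x.1
    · subst h; simp [smul_eq_mul]
    · simp [hzero i h, smul_eq_mul]
  rw [hmul, hfun, ← udu_smul, ← udu_spectral hA.1, ha]

end helpers

theorem rank_one_fidelity_sq_bound {d : ℕ} (A B : Matrix (Fin d) (Fin d) ℂ)
    (hA : A.PosSemidef) (hB : B.PosSemidef) (hrank : A.rank = 1) :
    (1/2) * (((A + B).trace).re) - (1/2) * traceNorm (A - B) ≤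
      ((A.trace).re)⁻¹ * fid A B ^ 2 := by
  classical
  obtain ⟨ha, hAA⟩ := rank_one_facts hA hrank
  set a := A.trace.re with haa
  have haC : (a : ℂ) ≠ 0 := by exact_mod_cast ne_of_gt (by exact_mod_cast ha)
  -- the projector P = a⁻¹ • A
  set P : Matrix (Fin d) (Fin d) ℂ := ((a⁻¹ : ℝ) : ℂ) • A with hPdef
  have hlam : A.trace = ((∑ i, hA.1.eigenvalues i : ℝ) : ℂ) := by
    conv_lhs => rw [udu_spectral hA.1]
    exact udu_trace _ _
  have hsum_eig : ∑ i, hA.1.eigenvalues i = a := by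
    have := congrArg Complex.re hlam
    simpa using this.symm
  have hPudu : P = udu hA.1 (a⁻¹ • hA.1.eigenvalues) := by
    rw [hPdef]
    conv_lhs => rw [udu_spectral hA.1]
    rw [udu_smul]
  have hP : P.PosSemidef := by
    rw [hPudu]
    exact udu_posSemidef _ fun i =>
      mul_nonneg (inv_nonneg.mpr ha.le) (hA.eigenvalues_nonneg i)
  have hQ : (1 - P).PosSemidef := by
    rw [hPudu, ← udu_one hA.1, udu_sub]
    refine udu_posSemidef _ fun i => ?_
    have h1 : hA.1.eigenvalues i ≤ a := hsum_eig ▸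
      Finset.single_le_sum (fun j _ => hA.eigenvalues_nonneg j) (Finset.mem_univ i)
    have : a⁻¹ * hA.1.eigenvalues i ≤ a⁻¹ * a :=
      mul_le_mul_of_nonneg_left h1 (inv_nonneg.mpr ha.le)
    rw [inv_mul_cancel₀ (ne_of_gt ha)] at this
    simpa [Pi.sub_apply, smul_eq_mul] using sub_nonneg.mpr this
  have hA1P : A * (1 - P) = 0 := by
    rw [Matrix.mul_sub, mul_one, hPdef, Matrix.mul_smul, hAA, smul_smul]
    rw [show ((a⁻¹ : ℝ) : ℂ) * ((a : ℝ) : ℂ) = 1 by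
      rw [← Complex.ofReal_mul, inv_mul_cancel₀ (ne_of_gt ha)]; simp]
    simp
  -- Jordan decomposition of A - B
  have hHd : (A - B).IsHermitian := hA.1.sub hB.1
  set Dp := matPosPart (A - B) with hDpdef
  set Dn := matNegPart (A - B) with hDndef
  have hDp : Dp.PosSemidef := matPosPart_posSemidef hHd
  have hDn : Dn.PosSemidef := matNegPart_posSemidef hHd
  have hsub : Dp - Dn = A - B := matPosPart_sub_matNegPart
  have haddabs : Dp + Dn = matAbs (A - B) := matPosPart_add_matNegPart
  -- trace identities
  have tr_sub : Dp.trace.re - Dn.trace.re = A.trace.re - B.trace.re := by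
    have := congrArg (fun (X : Matrix (Fin d) (Fin d) ℂ) => X.trace.re) hsub
    simpa [Matrix.trace_sub, Complex.sub_re] using this
  have tr_abs : traceNorm (A - B) = Dp.trace.re + Dn.trace.re := by
    rw [traceNorm, ← haddabs]
    simp [Matrix.trace_add, Complex.add_re]
  -- split A - Dp over P and 1 - P
  have hsplit : (A - Dp) = (A - Dp) * P + (A - Dp) * (1 - P) := by
    rw [← Matrix.mul_add]
    simp
  have hABDn : A - Dp = B - Dn := by
    have : Dp - Dn = A - B := hsub
    have := sub_eq_sub_iff_sub_eq_sub.mp this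
    linear_combination (norm := abel) - this
  -- bound on the (1-P) part
  have hb1 : ((A - Dp) * (1 - P)).trace.re ≤ 0 := by
    rw [Matrix.sub_mul, hA1P]
    have := trace_mul_psd_nonneg hDp hQ
    simp only [zero_sub, Matrix.trace_neg, Complex.neg_re]
    linarith
  -- bound on the P part
  have hb2 : ((A - Dp) * P).trace.re ≤ (B * P).trace.re := by
    rw [hABDn, Matrix.sub_mul]
    have := trace_mul_psd_nonneg hDn hP
    simp only [Matrix.trace_sub, Complex.sub_re]
    linarith
  have hBP : (B * P).trace.re = a⁻¹ * (A * B).trace.re := by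
    rw [hPdef, Matrix.mul_smul, Matrix.trace_smul]
    rw [Matrix.trace_mul_comm]
    simp [Complex.mul_re]
  have hfid : (A * B).trace.re ≤ fid A B ^ 2 := trace_mul_le_fid_sq hA hB
  have key : A.trace.re - Dp.trace.re ≤ a⁻¹ * fid A B ^ 2 := by
    have hsplit' : (A - Dp).trace.re
        = ((A - Dp) * P).trace.re + ((A - Dp) * (1 - P)).trace.re := by
      conv_lhs => rw [hsplit]
      simp [Matrix.trace_add, Complex.add_re]
    have h5 : (A - Dp).trace.re = A.trace.re - Dp.trace.re := by
      simp [Matrix.trace_sub, Complex.sub_re]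
    have h6 : a⁻¹ * (A * B).trace.re ≤ a⁻¹ * fid A B ^ 2 :=
      mul_le_mul_of_nonneg_left hfid (inv_nonneg.mpr ha.le)
    linarith
  have htr_add : ((A + B).trace).re = A.trace.re + B.trace.re := by
    simp [Matrix.trace_add, Complex.add_re]
  rw [htr_add, tr_abs]
  linarith
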